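/- Let S : [0,∞) → [0,∞) be a one-dimensional subordinator with Laplace transform E[e^{-rS(t)}] = e^{-tB(r)} for a Bernstein function B satisfying B(r) ≥ c r^{α/2} for all r ≥ r_0, with α ∈ (0,2), c, r_0 > 0. Then for every k > 0 there exists a constant C > 0 such that E[S(T)^{-k}] ≤ C T^{-2k/α} for all T ∈ (0,1]. -/

import Mathlib

open MeasureTheory

open Real Set Filter in
private lemma aux_int {p q b : ℝ} (hp : 0 < p) (hq : -1 < q) (hb : 0 < b) :
    IntegrableOn (fun x : ℝ => x ^ q * Real.exp (-b * x ^ p)) (Set.Ioi 0) := by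
  have hq' : -1 < (q + 1) / p - 1 := by
    have : 0 < (q + 1) / p := div_pos (by linarith) hp
    linarith
  have h0 : IntegrableOn (fun y : ℝ => y ^ ((q + 1) / p - 1) * Real.exp (-b * y)) (Set.Ioi 0) := by
    have := integrableOn_rpow_mul_exp_neg_mul_rpow (p := 1) hq' one_pos hb
    simpa [Real.rpow_one] using this
  have h1 := (integrableOn_Ioi_comp_rpow_iff'
    (fun y => y ^ ((q + 1) / p - 1) * Real.exp (-b * y)) hp.ne').mpr h0
  refine h1.congr_fun (fun x hx => ?_) measurableSet_Ioi
  have hx0 : (0:ℝ) < x := hx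
  have he : p - 1 + p * ((q + 1) / p - 1) = q := by field_simp; ring
  beta_reduce
  rw [smul_eq_mul, ← Real.rpow_mul hx0.le, ← mul_assoc, ← Real.rpow_add hx0, he]

open Real Set in
private lemma aux_lint {p q b : ℝ} (hp : 0 < p) (hq : -1 < q) (hb : 0 < b) :
    ∫⁻ x in Set.Ioi (0:ℝ), ENNReal.ofReal (x ^ q * Real.exp (-b * x ^ p)) =
      ENNReal.ofReal (b ^ (-(q + 1) / p) * (1 / p) * Real.Gamma ((q + 1) / p)) := by
  rw [← integral_rpow_mul_exp_neg_mul_rpow hp hq hb,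
    ofReal_integral_eq_lintegral_ofReal (aux_int hp hq hb)
      (ae_restrict_of_forall_mem measurableSet_Ioi fun x hx =>
        mul_nonneg (Real.rpow_nonneg (le_of_lt hx) q) (Real.exp_nonneg _))]

/-- Negative moments of a subordinator whose Bernstein function satisfies
`B(r) ≥ c r^{α/2}` for `r ≥ r₀`: for every `k > 0` there is `C > 0` with
`E[S(T)^{-k}] ≤ C T^{-2k/α}` for all `T ∈ (0,1]`. -/
theorem stmt4 {Ω : Type*} [MeasurableSpace Ω] (μ : Measure Ω) [IsProbabilityMeasure μ]
    (S : ℝ → Ω → ℝ) (B : ℝ → ℝ) (α c r₀ : ℝ)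
    (hα : α ∈ Set.Ioo (0:ℝ) 2) (hc : 0 < c) (hr₀ : 0 < r₀)
    (hSnn : ∀ t ω, 0 ≤ S t ω)
    (hSmeas : ∀ t, Measurable (S t))
    (hLaplace : ∀ t r : ℝ, 0 ≤ t → 0 ≤ r →
      ∫ ω, Real.exp (-(r * S t ω)) ∂μ = Real.exp (-(t * B r)))
    (hB : ∀ r, r₀ ≤ r → c * r ^ (α / 2) ≤ B r)
    (k : ℝ) (hk : 0 < k) :
    ∃ C > 0, ∀ T ∈ Set.Ioc (0:ℝ) 1,
      ∫⁻ ω, ENNReal.ofReal ((S T ω) ^ (-k)) ∂μ ≤ ENNReal.ofReal (C * T ^ (-(2 * k / α))) := by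
  obtain ⟨hα0, hα2⟩ := hα
  have hαne : α ≠ 0 := ne_of_gt hα0
  have hΓk : 0 < Real.Gamma k := Real.Gamma_pos_of_pos hk
  have hΓe : 0 < Real.Gamma (2 * k / α) :=
    Real.Gamma_pos_of_pos (by positivity)
  set D : ℝ := Real.exp r₀ * Real.Gamma k + c ^ (-(2 * k / α)) * (2 / α) * Real.Gamma (2 * k / α)
    with hD_def
  have hD : 0 < D := by
    have h1 : 0 < c ^ (-(2 * k / α)) := Real.rpow_pos_of_pos hc _
    have h2 : 0 < Real.exp r₀ := Real.exp_pos _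
    positivity
  refine ⟨D / Real.Gamma k, by positivity, ?_⟩
  rintro T ⟨hT0, hT1⟩
  -- integrability of the exponential under μ
  have hint : ∀ r : ℝ, 0 ≤ r → Integrable (fun ω => Real.exp (-(r * S T ω))) μ := by
    intro r hr
    refine Integrable.mono' (integrable_const 1)
      (((hSmeas T).const_mul r).neg.exp.aestronglyMeasurable) (ae_of_all _ fun ω => ?_)
    rw [Real.norm_eq_abs, abs_of_nonneg (Real.exp_nonneg _)]
    calc Real.exp (-(r * S T ω)) ≤ Real.exp 0 :=
          Real.exp_le_exp.mpr (by nlinarith [hSnn T ω])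
      _ = 1 := Real.exp_zero
  -- Laplace transform as a lower Lebesgue integral
  have hLap : ∀ r : ℝ, 0 ≤ r →
      ∫⁻ ω, ENNReal.ofReal (Real.exp (-(r * S T ω))) ∂μ
        = ENNReal.ofReal (Real.exp (-(T * B r))) := by
    intro r hr
    rw [← hLaplace T r hT0.le hr,
      ofReal_integral_eq_lintegral_ofReal (hint r hr) (ae_of_all _ fun ω => Real.exp_nonneg _)]
  -- exp(-(T * B r)) ≤ 1 for r ≥ 0
  have hexp1 : ∀ r : ℝ, 0 ≤ r → Real.exp (-(T * B r)) ≤ 1 := by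
    intro r hr
    rw [← hLaplace T r hT0.le hr]
    calc ∫ ω, Real.exp (-(r * S T ω)) ∂μ ≤ ∫ _ω, (1:ℝ) ∂μ := by
          refine integral_mono (hint r hr) (integrable_const 1) fun ω => ?_
          calc Real.exp (-(r * S T ω)) ≤ Real.exp 0 :=
                Real.exp_le_exp.mpr (by nlinarith [hSnn T ω])
            _ = 1 := Real.exp_zero
      _ = 1 := by simp
  -- a.e. positivity of S T
  have hp2 : 0 < α / 2 := by linarith
  have hN : μ {ω | S T ω = 0} = 0 := by
    have hNm : MeasurableSet {ω | S T ω = 0} := (hSmeas T) (measurableSet_singleton 0)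
    have hub : ∀ r : ℝ, r₀ ≤ r →
        μ {ω | S T ω = 0} ≤ ENNReal.ofReal (Real.exp (-(T * c) * r ^ (α / 2))) := by
      intro r hr
      have hr0 : (0:ℝ) ≤ r := le_trans hr₀.le hr
      have h1 : ∫⁻ ω in {ω | S T ω = 0}, ENNReal.ofReal (Real.exp (-(r * S T ω))) ∂μ
          = ∫⁻ _ω in {ω | S T ω = 0}, 1 ∂μ :=
        setLIntegral_congr_fun hNm (fun ω hω => by
          simp [Set.mem_setOf_eq.mp hω])
      calc μ {ω | S T ω = 0}
          = ∫⁻ ω in {ω | S T ω = 0}, ENNReal.ofReal (Real.exp (-(r * S T ω))) ∂μ := by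
            rw [h1, setLIntegral_one]
        _ ≤ ∫⁻ ω, ENNReal.ofReal (Real.exp (-(r * S T ω))) ∂μ :=
            setLIntegral_le_lintegral _ _
        _ = ENNReal.ofReal (Real.exp (-(T * B r))) := hLap r hr0
        _ ≤ ENNReal.ofReal (Real.exp (-(T * c) * r ^ (α / 2))) := by
            refine ENNReal.ofReal_le_ofReal (Real.exp_le_exp.mpr ?_)
            have h2 := mul_le_mul_of_nonneg_left (hB r hr) hT0.le
            nlinarith
    have htend : Filter.Tendsto (fun r : ℝ => ENNReal.ofReal (Real.exp (-(T * c) * r ^ (α / 2))))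
        Filter.atTop (nhds 0) := by
      have h1 : Filter.Tendsto (fun r : ℝ => -(T * c) * r ^ (α / 2)) Filter.atTop Filter.atBot :=
        Filter.Tendsto.const_mul_atTop_of_neg (by nlinarith : -(T * c) < 0) (tendsto_rpow_atTop hp2)
      have h2 := Real.tendsto_exp_atBot.comp h1
      simpa using ENNReal.tendsto_ofReal h2
    have h3 := ge_of_tendsto htend (Filter.eventually_atTop.2 ⟨r₀, hub⟩)
    exact le_antisymm (by simpa using h3) (zero_le)
  have hae : ∀ᵐ ω ∂μ, 0 < S T ω := by
    rw [ae_iff]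
    refine measure_mono_null (fun ω hω => ?_) hN
    exact le_antisymm (not_lt.mp hω) (hSnn T ω)
  -- pointwise Gamma identity
  have hA : ∀ s : ℝ, 0 < s →
      (∫⁻ r in Set.Ioi (0:ℝ), ENNReal.ofReal (r ^ (k - 1) * Real.exp (-(r * s))))
        = ENNReal.ofReal (Real.Gamma k) * ENNReal.ofReal (s ^ (-k)) := by
    intro s hs
    have h1 : ∀ r ∈ Set.Ioi (0:ℝ), ENNReal.ofReal (r ^ (k - 1) * Real.exp (-(r * s)))
        = ENNReal.ofReal (r ^ (k - 1) * Real.exp (-s * r ^ (1:ℝ))) := by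
      intro r hr
      rw [Real.rpow_one]
      ring_nf
    rw [setLIntegral_congr_fun measurableSet_Ioi h1,
      aux_lint one_pos (by linarith) hs,
      show -(k - 1 + 1) / 1 = -k by ring, show (k - 1 + 1) / 1 = k by ring,
      ← ENNReal.ofReal_mul hΓk.le]
    congr 1
    ring
  have hmeas : AEMeasurable (Function.uncurry fun (ω : Ω) (r : ℝ) =>
      ENNReal.ofReal (r ^ (k - 1) * Real.exp (-(r * S T ω))))
      (μ.prod (volume.restrict (Set.Ioi 0))) := by
    have : Measurable fun z : Ω × ℝ =>
        ENNReal.ofReal (z.2 ^ (k - 1) * Real.exp (-(z.2 * S T z.1))) := by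
      have hm := hSmeas T
      fun_prop
    exact this.aemeasurable
  have key : ENNReal.ofReal (Real.Gamma k) * ∫⁻ ω, ENNReal.ofReal ((S T ω) ^ (-k)) ∂μ
      = ∫⁻ r in Set.Ioi (0:ℝ), ENNReal.ofReal (r ^ (k - 1) * Real.exp (-(T * B r))) := by
    rw [← lintegral_const_mul' _ _ ENNReal.ofReal_ne_top]
    have step1 : ∫⁻ ω, ENNReal.ofReal (Real.Gamma k) * ENNReal.ofReal ((S T ω) ^ (-k)) ∂μ
        = ∫⁻ ω, ∫⁻ r in Set.Ioi (0:ℝ),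
            ENNReal.ofReal (r ^ (k - 1) * Real.exp (-(r * S T ω))) ∂volume ∂μ := by
      refine lintegral_congr_ae ?_
      filter_upwards [hae] with ω hω
      exact (hA _ hω).symm
    rw [step1, lintegral_lintegral_swap hmeas]
    refine setLIntegral_congr_fun measurableSet_Ioi (fun r hr => ?_)
    have hr0 : (0:ℝ) < r := hr
    calc ∫⁻ ω, ENNReal.ofReal (r ^ (k - 1) * Real.exp (-(r * S T ω))) ∂μ
        = ∫⁻ ω, ENNReal.ofReal (r ^ (k - 1))
            * ENNReal.ofReal (Real.exp (-(r * S T ω))) ∂μ := by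
          simp_rw [← ENNReal.ofReal_mul (Real.rpow_nonneg hr0.le _)]
      _ = ENNReal.ofReal (r ^ (k - 1))
            * ∫⁻ ω, ENNReal.ofReal (Real.exp (-(r * S T ω))) ∂μ :=
          lintegral_const_mul' _ _ ENNReal.ofReal_ne_top
      _ = ENNReal.ofReal (r ^ (k - 1) * Real.exp (-(T * B r))) := by
          rw [hLap r hr0.le, ← ENNReal.ofReal_mul (Real.rpow_nonneg hr0.le _)]
  -- now the upper bound
  have hG0 : (ENNReal.ofReal (Real.Gamma k)) ≠ 0 := (ENNReal.ofReal_pos.mpr hΓk).ne'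
  have hT1e : 1 ≤ T ^ (-(2 * k / α)) :=
    Real.one_le_rpow_of_pos_of_le_one_of_nonpos hT0 hT1 (by
      have : 0 < 2 * k / α := by positivity
      linarith)
  rw [← ENNReal.mul_le_mul_iff_right hG0 ENNReal.ofReal_ne_top, key,
    ← ENNReal.ofReal_mul hΓk.le,
    show Real.Gamma k * (D / Real.Gamma k * T ^ (-(2 * k / α)))
        = D * T ^ (-(2 * k / α)) from by field_simp,
    ← Set.Ioc_union_Ioi_eq_Ioi hr₀.le,
    lintegral_union measurableSet_Ioi (Set.Ioc_disjoint_Ioi le_rfl)]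
  have part1 : ∫⁻ r in Set.Ioc (0:ℝ) r₀, ENNReal.ofReal (r ^ (k - 1) * Real.exp (-(T * B r)))
      ≤ ENNReal.ofReal (Real.exp r₀ * Real.Gamma k) := by
    calc ∫⁻ r in Set.Ioc (0:ℝ) r₀, ENNReal.ofReal (r ^ (k - 1) * Real.exp (-(T * B r)))
        ≤ ∫⁻ r in Set.Ioc (0:ℝ) r₀, ENNReal.ofReal
            (Real.exp r₀ * (r ^ (k - 1) * Real.exp (-1 * r ^ (1:ℝ)))) := by
          refine setLIntegral_mono (by fun_prop) fun r hr => ?_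
          refine ENNReal.ofReal_le_ofReal ?_
          have h2 := hexp1 r hr.1.le
          have e1 : (1:ℝ) ≤ Real.exp r₀ * Real.exp (-1 * r ^ (1:ℝ)) := by
            rw [Real.rpow_one, ← Real.exp_add]
            exact Real.one_le_exp (by linarith [hr.2])
          have h3 : 0 ≤ r ^ (k - 1) := Real.rpow_nonneg hr.1.le _
          nlinarith [Real.exp_nonneg (-(T * B r))]
      _ ≤ ∫⁻ r in Set.Ioi (0:ℝ), ENNReal.ofReal
            (Real.exp r₀ * (r ^ (k - 1) * Real.exp (-1 * r ^ (1:ℝ)))) :=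
          lintegral_mono_set Set.Ioc_subset_Ioi_self
      _ = ENNReal.ofReal (Real.exp r₀ * Real.Gamma k) := by
          simp_rw [ENNReal.ofReal_mul (Real.exp_nonneg r₀)]
          rw [lintegral_const_mul' _ _ ENNReal.ofReal_ne_top,
            aux_lint one_pos (by linarith) one_pos,
            show (k - 1 + 1) / 1 = k by ring, Real.one_rpow,
            ← ENNReal.ofReal_mul (Real.exp_nonneg r₀)]
          norm_num
          exact ENNReal.ofReal_mul (Real.exp_nonneg r₀)
  have part2 : ∫⁻ r in Set.Ioi r₀, ENNReal.ofReal (r ^ (k - 1) * Real.exp (-(T * B r)))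
      ≤ ENNReal.ofReal (T ^ (-(2 * k / α))
          * (c ^ (-(2 * k / α)) * (2 / α) * Real.Gamma (2 * k / α))) := by
    calc ∫⁻ r in Set.Ioi r₀, ENNReal.ofReal (r ^ (k - 1) * Real.exp (-(T * B r)))
        ≤ ∫⁻ r in Set.Ioi r₀, ENNReal.ofReal
            (r ^ (k - 1) * Real.exp (-(T * c) * r ^ (α / 2))) := by
          refine setLIntegral_mono (by fun_prop) fun r hr => ?_
          refine ENNReal.ofReal_le_ofReal ?_
          have hrr : r₀ ≤ r := le_of_lt hr
          have h2 := mul_le_mul_of_nonneg_left (hB r hrr) hT0.le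
          have h3 : 0 ≤ r ^ (k - 1) := Real.rpow_nonneg (le_trans hr₀.le hrr) _
          have h4 : Real.exp (-(T * B r)) ≤ Real.exp (-(T * c) * r ^ (α / 2)) :=
            Real.exp_le_exp.mpr (by nlinarith)
          nlinarith [Real.exp_nonneg (-(T * B r))]
      _ ≤ ∫⁻ r in Set.Ioi (0:ℝ), ENNReal.ofReal
            (r ^ (k - 1) * Real.exp (-(T * c) * r ^ (α / 2))) :=
          lintegral_mono_set (Set.Ioi_subset_Ioi hr₀.le)
      _ = ENNReal.ofReal ((T * c) ^ (-(k - 1 + 1) / (α / 2)) * (1 / (α / 2))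
            * Real.Gamma ((k - 1 + 1) / (α / 2))) :=
          aux_lint hp2 (by linarith) (mul_pos hT0 hc)
      _ = ENNReal.ofReal (T ^ (-(2 * k / α))
            * (c ^ (-(2 * k / α)) * (2 / α) * Real.Gamma (2 * k / α))) := by
          rw [show -(k - 1 + 1) / (α / 2) = -(2 * k / α) from by
              rw [div_div_eq_mul_div]
              ring,
            show (k - 1 + 1) / (α / 2) = 2 * k / α from by
              rw [div_div_eq_mul_div]
              ring,
            show (1:ℝ) / (α / 2) = 2 / α from by
              rw [div_div_eq_mul_div, one_mul],
            Real.mul_rpow hT0.le hc.le]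
          ring_nf
  calc (∫⁻ r in Set.Ioc (0:ℝ) r₀, ENNReal.ofReal (r ^ (k - 1) * Real.exp (-(T * B r))))
        + ∫⁻ r in Set.Ioi r₀, ENNReal.ofReal (r ^ (k - 1) * Real.exp (-(T * B r)))
      ≤ ENNReal.ofReal (Real.exp r₀ * Real.Gamma k)
        + ENNReal.ofReal (T ^ (-(2 * k / α))
          * (c ^ (-(2 * k / α)) * (2 / α) * Real.Gamma (2 * k / α))) := add_le_add part1 part2
    _ ≤ ENNReal.ofReal (D * T ^ (-(2 * k / α))) := by
        rw [← ENNReal.ofReal_add (by positivity) (by positivity)]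
        refine ENNReal.ofReal_le_ofReal ?_
        rw [hD_def]
        have hcp : 0 < c ^ (-(2 * k / α)) := Real.rpow_pos_of_pos hc _
        have hexpp : 0 < Real.exp r₀ := Real.exp_pos _
        nlinarith [mul_pos hexpp hΓk,
          mul_pos (mul_pos hcp (show (0:ℝ) < 2 / α by positivity)) hΓe]
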